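/- Let R be a commutative ring, S a multiplicative subset of R, and A a u-S-pseudo-projective R-module. Then every u-S-epimorphism f : A → A u-S-splits; that is, there exist s ∈ S and an endomorphism e of A such that f ∘ e = s·1_A. -/

import Mathlib

/-!  Definitions for uniformly-S-pseudo-projective modules
(M. Adarbeh, M. Saleh, "Uniformly-S-pseudo-projective modules"). -/

universe u v w

/-- `S` is a multiplicative subset of the commutative ring `R`:
`1 ∈ S`, `0 ∉ S`, and `S` is closed under multiplication. -/
def IsMultSubset {R : Type u} [CommRing R] (S : Set R) : Prop :=
  1 ∈ S ∧ (0 : R) ∉ S ∧ ∀ ⦃a b : R⦄, a ∈ S → b ∈ S → a * b ∈ S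

/-- An `R`-module `T` is `u`-`S`-torsion if some `s ∈ S` annihilates it. -/
def IsUSTorsion {R : Type u} [CommRing R] (S : Set R) (T : Type v) [AddCommGroup T]
    [Module R T] : Prop :=
  ∃ s ∈ S, ∀ t : T, s • t = 0

/-- `f` is a `u`-`S`-monomorphism: its kernel is `u`-`S`-torsion. -/
def IsUSMono {R : Type u} [CommRing R] (S : Set R) {M : Type v} {N : Type w}
    [AddCommGroup M] [Module R M] [AddCommGroup N] [Module R N] (f : M →ₗ[R] N) : Prop :=
  ∃ s ∈ S, ∀ m ∈ LinearMap.ker f, s • m = (0 : M)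

/-- `f` is a `u`-`S`-epimorphism: its cokernel is `u`-`S`-torsion. -/
def IsUSEpi {R : Type u} [CommRing R] (S : Set R) {M : Type v} {N : Type w}
    [AddCommGroup M] [Module R M] [AddCommGroup N] [Module R N] (f : M →ₗ[R] N) : Prop :=
  ∃ s ∈ S, ∀ n : N, s • n ∈ LinearMap.range f

/-- `f` is a `u`-`S`-isomorphism: both a `u`-`S`-monomorphism and a `u`-`S`-epimorphism. -/
def IsUSIso {R : Type u} [CommRing R] (S : Set R) {M : Type v} {N : Type w}
    [AddCommGroup M] [Module R M] [AddCommGroup N] [Module R N] (f : M →ₗ[R] N) : Prop :=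
  IsUSMono S f ∧ IsUSEpi S f

/-- `P` is `u`-`S`-pseudo-projective: for every submodule `K` of `P` there is `s ∈ S` such that
every `u`-`S`-epimorphism `f : P → P/K` satisfies `s • f = π_K ∘ g` for some endomorphism
`g` of `P`. -/
def IsUSPseudoProjective {R : Type u} [CommRing R] (S : Set R) (P : Type v)
    [AddCommGroup P] [Module R P] : Prop :=
  ∀ K : Submodule R P, ∃ s ∈ S, ∀ f : P →ₗ[R] P ⧸ K, IsUSEpi S f →
    ∃ g : P →ₗ[R] P, s • f = K.mkQ.comp g

/-- `M` is `u`-`S`-quasi-projective. -/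
def IsUSQuasiProjective {R : Type u} [CommRing R] (S : Set R) (M : Type v)
    [AddCommGroup M] [Module R M] : Prop :=
  ∀ K : Submodule R M, ∃ s ∈ S, ∀ f : M →ₗ[R] M ⧸ K,
    ∃ g : M →ₗ[R] M, s • f = K.mkQ.comp g

/-- `Q` is `u`-`S`-projective (test modules in `Type v₁`). -/
def IsUSProjective.{u₁, v₁, w₁} {R : Type u₁} [CommRing R] (S : Set R) (Q : Type w₁)
    [AddCommGroup Q] [Module R Q] : Prop :=
  ∀ (B C : Type v₁) [AddCommGroup B] [AddCommGroup C] [Module R B] [Module R C]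
    (g : B →ₗ[R] C), IsUSEpi S g →
      ∃ s ∈ S, ∀ h : Q →ₗ[R] C, ∃ h' : Q →ₗ[R] B, s • h = g.comp h'

/-- `M` is `u`-`S`-injective (test modules in `Type v₁`). -/
def IsUSInjective.{u₁, v₁, w₁} {R : Type u₁} [CommRing R] (S : Set R) (M : Type w₁)
    [AddCommGroup M] [Module R M] : Prop :=
  ∀ (A B : Type v₁) [AddCommGroup A] [AddCommGroup B] [Module R A] [Module R B]
    (f : A →ₗ[R] B), IsUSMono S f →
      ∃ s ∈ S, ∀ h : A →ₗ[R] M, ∃ h' : B →ₗ[R] M, s • h = h'.comp f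

/-- `E` is `u`-`S`-pseudo-injective. -/
def IsUSPseudoInjective {R : Type u} [CommRing R] (S : Set R) (E : Type v)
    [AddCommGroup E] [Module R E] : Prop :=
  ∀ K : Submodule R E, ∃ s ∈ S, ∀ f : ↥K →ₗ[R] E, IsUSMono S f →
    ∃ g : E →ₗ[R] E, g.comp K.subtype = s • f

/-- The sequence `0 → A →f B →g C → 0` is short `u`-`S`-exact. -/
def IsShortUSExact {R : Type u} [CommRing R] (S : Set R) {A B C : Type v}
    [AddCommGroup A] [Module R A] [AddCommGroup B] [Module R B] [AddCommGroup C] [Module R C]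
    (f : A →ₗ[R] B) (g : B →ₗ[R] C) : Prop :=
  IsUSMono S f ∧ IsUSEpi S g ∧
    ∃ s ∈ S, (∀ x ∈ LinearMap.ker g, s • x ∈ LinearMap.range f) ∧
      (∀ x ∈ LinearMap.range f, s • x ∈ LinearMap.ker g)

/-- The short `u`-`S`-exact sequence `0 → A →f B →g C → 0` is `u`-`S`-split:
some multiple `s • 1_A` of the identity factors back through `f`. -/
def IsUSSplitSeq {R : Type u} [CommRing R] (S : Set R) {A B : Type v}
    [AddCommGroup A] [Module R A] [AddCommGroup B] [Module R B] (f : A →ₗ[R] B) : Prop :=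
  ∃ s ∈ S, ∃ f' : B →ₗ[R] A, f'.comp f = s • (LinearMap.id : A →ₗ[R] A)

/-- `M` is a `u`-`S`-semisimple module (test sequences with modules in `Type v₁`). -/
def IsUSSemisimpleModule.{u₁, v₁} {R : Type u₁} [CommRing R] (S : Set R) (M : Type v₁)
    [AddCommGroup M] [Module R M] : Prop :=
  ∀ (A C : Type v₁) [AddCommGroup A] [AddCommGroup C] [Module R A] [Module R C]
    (f : A →ₗ[R] M) (g : M →ₗ[R] C), IsShortUSExact S f g → IsUSSplitSeq S f

/-- `R` is a `u`-`S`-semisimple ring: every free `R`-module is `u`-`S`-semisimple. -/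
def IsUSSemisimpleRing.{u₁, v₁} {R : Type u₁} [CommRing R] (S : Set R) : Prop :=
  ∀ (F : Type v₁) [AddCommGroup F] [Module R F], Module.Free R F →
    IsUSSemisimpleModule.{u₁, v₁} S F

/-- A submodule `N` of `M` is a `u`-`S`-direct summand of `M` if there is an `R`-module `N'`
and a `u`-`S`-isomorphism between `M` and `N ⊕ N'`. -/
def IsUSDirectSummand {R : Type u} [CommRing R] (S : Set R) {M : Type v}
    [AddCommGroup M] [Module R M] (N : Submodule R M) : Prop :=
  ∃ (N' : ModuleCat.{v} R) (h : M →ₗ[R] (↥N × ↥N')), IsUSIso S h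

/-- `A` is `u`-`S`-projective relative to `B`. -/
def IsUSProjectiveRel {R : Type u} [CommRing R] (S : Set R) (A : Type v) (B : Type w)
    [AddCommGroup A] [Module R A] [AddCommGroup B] [Module R B] : Prop :=
  ∀ K : Submodule R B, ∃ s ∈ S, ∀ f : A →ₗ[R] B ⧸ K,
    ∃ h : A →ₗ[R] B, s • f = K.mkQ.comp h

/-- If `A` is `u`-`S`-pseudo-projective, then every `u`-`S`-epimorphism `f : A → A`
`u`-`S`-splits: there are `s ∈ S` and an endomorphism `e` of `A` with `f ∘ e = s • 1_A`. -/
theorem uSEpi_uSSplits_of_uSPseudoProjective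
    {R : Type u} [CommRing R] (S : Set R) (hS : IsMultSubset S)
    {A : Type v} [AddCommGroup A] [Module R A] (hA : IsUSPseudoProjective S A)
    (f : A →ₗ[R] A) (hf : IsUSEpi S f) :
    ∃ s ∈ S, ∃ e : A →ₗ[R] A, f.comp e = s • (LinearMap.id : A →ₗ[R] A) := by
  obtain ⟨t, htS, ht⟩ := hf
  obtain ⟨s, hsS, hs⟩ := hA (LinearMap.ker f)
  let eqv := f.quotKerEquivRange
  let c : A →ₗ[R] LinearMap.range f :=
    LinearMap.codRestrict (LinearMap.range f) (t • LinearMap.id) (fun a => ht a)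
  let h : A →ₗ[R] A ⧸ LinearMap.ker f := eqv.symm.toLinearMap.comp c
  have hc : ∀ a : A, (c a : A) = t • a := fun a => rfl
  have hcoe : ∀ y : A ⧸ LinearMap.ker f, h (eqv y : A) = t • y := by
    intro y
    obtain ⟨a, rfl⟩ := Submodule.Quotient.mk_surjective _ y
    have h1 : (eqv (Submodule.Quotient.mk a) : A) = f a :=
      f.quotKerEquivRange_apply_mk a
    show eqv.symm (c (eqv (Submodule.Quotient.mk a) : A)) = _
    have h2 : c (eqv (Submodule.Quotient.mk a) : A) = ⟨f (t • a), LinearMap.mem_range_self f (t • a)⟩ := by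
      apply Subtype.ext
      show t • (eqv (Submodule.Quotient.mk a) : A) = f (t • a)
      rw [h1, map_smul]
    rw [h2, f.quotKerEquivRange_symm_apply_image]
    show Submodule.Quotient.mk (t • a) = _
    rw [← Submodule.Quotient.mk_smul]
  have hepi : IsUSEpi S h := by
    refine ⟨t, htS, fun y => ⟨(eqv y : A), hcoe y⟩⟩
  obtain ⟨g, hg⟩ := hs h hepi
  refine ⟨s * t, hS.2.2 hsS htS, g, ?_⟩
  ext a
  have h3 : (LinearMap.ker f).mkQ (g a) = s • h a := by
    have := congrArg (fun φ : A →ₗ[R] A ⧸ LinearMap.ker f => φ a) hg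
    simpa using this.symm
  have h4 : f (g a) = (eqv ((LinearMap.ker f).mkQ (g a)) : A) :=
    (f.quotKerEquivRange_apply_mk (g a)).symm
  have h5 : (eqv (h a) : A) = t • a := by
    show (eqv (eqv.symm (c a)) : A) = t • a
    rw [eqv.apply_symm_apply]; exact hc a
  simp only [LinearMap.comp_apply, h4, h3, map_smul, LinearMap.smul_apply, LinearMap.id_apply]
  rw [Submodule.coe_smul, h5, smul_smul]
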